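/- Let p, q be distinct primes with ord_p(q) = p − 1, and let F_p be the p×p Fourier matrix over 𝔽_{q^{p−1}} with entries ω^{jm} for a primitive p-th root of unity ω. If q does not divide m_{A,B}·p − ∏_{i<j}(a_j − a_i)/∏_{i<j}(j − i), then det((F_p)_{A,B}) ≠ 0. -/

import Mathlib

open MvPolynomial

open Finset in
lemma prod_pairs {M : Type*} [CommMonoid M] {k : ℕ} (f : Fin k × Fin k → M) :
    ∏ w ∈ Finset.univ.filter (fun w : Fin k × Fin k => w.1 < w.2), f w
      = ∏ i : Fin k, ∏ j ∈ Finset.Ioi i, f (i, j) := by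
  rw [← Finset.univ_product_univ, Finset.prod_filter, Finset.prod_product]
  refine Finset.prod_congr rfl fun i _ => ?_
  rw [← Finset.filter_lt_eq_Ioi, Finset.prod_filter]

open Finset Polynomial in
lemma geom_factor (c d : ℕ) (h : d < c) :
    (Polynomial.X : ℤ[X]) ^ c - Polynomial.X ^ d
      = (Polynomial.X - 1) * (Polynomial.X ^ d * ∑ i ∈ range (c - d), Polynomial.X ^ i) := by
  have : (∑ i ∈ range (c - d), (Polynomial.X : ℤ[X]) ^ i) * (Polynomial.X - 1)
      = Polynomial.X ^ (c - d) - 1 := geom_sum_mul _ _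
  calc (Polynomial.X : ℤ[X]) ^ c - Polynomial.X ^ d
      = Polynomial.X ^ d * (Polynomial.X ^ (c - d) - 1) := by
        rw [mul_sub, mul_one, ← pow_add, Nat.add_sub_cancel' h.le]
    _ = _ := by rw [← this]; ring

open Finset Polynomial in
lemma eval_one_s {k : ℕ} (a : Fin k → ℕ) (ha : StrictMono a)
    (s : MvPolynomial (Fin k) ℤ)
    (hs : Matrix.det (fun i j : Fin k => (MvPolynomial.X j : MvPolynomial (Fin k) ℤ) ^ a i)
        = (∏ w ∈ Finset.univ.filter (fun w : Fin k × Fin k => w.1 < w.2),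
            (MvPolynomial.X w.2 - MvPolynomial.X w.1)) * s) :
    (∏ w ∈ Finset.univ.filter (fun w : Fin k × Fin k => w.1 < w.2),
        ((a w.2 : ℤ) - (a w.1 : ℤ)))
      = (∏ w ∈ Finset.univ.filter (fun w : Fin k × Fin k => w.1 < w.2),
            ((w.2 : ℤ) - (w.1 : ℤ))) * MvPolynomial.eval (fun _ => (1:ℤ)) s := by
  classical
  set φ : MvPolynomial (Fin k) ℤ →+* ℤ[X] :=
    MvPolynomial.eval₂Hom (Polynomial.C : ℤ →+* ℤ[X]) (fun j => Polynomial.X ^ (j : ℕ)) with hφ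
  have h2 := congrArg φ hs
  rw [map_mul, map_prod, RingHom.map_det φ (fun i j : Fin k => (MvPolynomial.X j : MvPolynomial (Fin k) ℤ) ^ a i)] at h2
  have hmap : Matrix.map (fun i j : Fin k => (MvPolynomial.X j : MvPolynomial (Fin k) ℤ) ^ a i) φ
      = Matrix.vandermonde (fun i => (Polynomial.X : ℤ[X]) ^ a i) := by
    ext i j
    simp [Matrix.vandermonde, Matrix.map, φ, ← pow_mul, mul_comm]
  rw [RingHom.mapMatrix_apply φ (fun i j : Fin k => (MvPolynomial.X j : MvPolynomial (Fin k) ℤ) ^ a i)] at h2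
  rw [hmap, Matrix.det_vandermonde] at h2
  rw [← prod_pairs (fun w : Fin k × Fin k => (Polynomial.X : ℤ[X]) ^ a w.2 - Polynomial.X ^ a w.1)]
    at h2
  have hφX : ∀ w : Fin k × Fin k,
      φ (MvPolynomial.X w.2 - MvPolynomial.X w.1)
        = (Polynomial.X : ℤ[X]) ^ (w.2 : ℕ) - Polynomial.X ^ (w.1 : ℕ) := by
    intro w; simp [φ]
  rw [Finset.prod_congr rfl (fun w _ => hφX w)] at h2
  set G : ℕ → ℕ → ℤ[X] := fun c d => Polynomial.X ^ d * ∑ i ∈ range (c - d), Polynomial.X ^ i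
    with hG
  set P := Finset.univ.filter (fun w : Fin k × Fin k => w.1 < w.2) with hP
  set K := P.card with hK
  have hL : ∏ w ∈ P, ((Polynomial.X : ℤ[X]) ^ a w.2 - Polynomial.X ^ a w.1)
      = (Polynomial.X - 1) ^ K * ∏ w ∈ P, G (a w.2) (a w.1) := by
    rw [← Finset.prod_const, ← Finset.prod_mul_distrib]
    refine Finset.prod_congr rfl fun w hw => ?_
    exact geom_factor _ _ (ha (Finset.mem_filter.mp hw).2)
  have hR : ∏ w ∈ P, ((Polynomial.X : ℤ[X]) ^ (w.2 : ℕ) - Polynomial.X ^ (w.1 : ℕ))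
      = (Polynomial.X - 1) ^ K * ∏ w ∈ P, G (w.2 : ℕ) (w.1 : ℕ) := by
    rw [← Finset.prod_const, ← Finset.prod_mul_distrib]
    refine Finset.prod_congr rfl fun w hw => ?_
    exact geom_factor _ _ (Finset.mem_filter.mp hw).2
  rw [hL, hR, mul_assoc] at h2
  have hXne : ((Polynomial.X : ℤ[X]) - 1) ^ K ≠ 0 := by
    apply pow_ne_zero
    have := Polynomial.X_sub_C_ne_zero (R := ℤ) 1
    simpa using this
  have h3 := mul_left_cancel₀ hXne h2
  -- now evaluate at 1
  have h4 := congrArg (Polynomial.eval (1 : ℤ)) h3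
  rw [Polynomial.eval_mul, Polynomial.eval_prod, Polynomial.eval_prod] at h4
  have hGval : ∀ c d : ℕ, Polynomial.eval (1:ℤ) (G c d) = ((c - d : ℕ) : ℤ) := by
    intro c d
    simp [G, Polynomial.eval_finset_sum]
  have hu : Polynomial.eval (1:ℤ) (φ s) = MvPolynomial.eval (fun _ => (1:ℤ)) s := by
    have := MvPolynomial.eval₂_comp_left (Polynomial.evalRingHom (1:ℤ))
      (Polynomial.C : ℤ →+* ℤ[X]) (fun j : Fin k => Polynomial.X ^ (j : ℕ)) s
    simp only [φ, MvPolynomial.coe_eval₂Hom] at *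
    rw [show ((Polynomial.evalRingHom (1:ℤ)) : ℤ[X] → ℤ)
        = Polynomial.eval (1:ℤ) from rfl] at this
    rw [this, ← MvPolynomial.eval₂_id]
    congr 1
    · ext x; simp
    · funext j; simp
  rw [hu] at h4
  calc (∏ w ∈ P, ((a w.2 : ℤ) - (a w.1 : ℤ)))
      = ∏ w ∈ P, Polynomial.eval (1:ℤ) (G (a w.2) (a w.1)) := by
        refine Finset.prod_congr rfl fun w hw => ?_
        rw [hGval]
        have : a w.1 ≤ a w.2 := (ha (Finset.mem_filter.mp hw).2).le
        push_cast [Nat.cast_sub this]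
        ring
    _ = (∏ w ∈ P, Polynomial.eval (1:ℤ) (G (w.2 : ℕ) (w.1 : ℕ)))
          * MvPolynomial.eval (fun _ => (1:ℤ)) s := h4
    _ = _ := by
        congr 1
        refine Finset.prod_congr rfl fun w hw => ?_
        rw [hGval]
        have : (w.1 : ℕ) ≤ (w.2 : ℕ) := (Finset.mem_filter.mp hw).2.le
        push_cast [Nat.cast_sub this]
        ring

open Finset in
lemma pow_congr_mod {M : Type*} [Monoid M] {ω : M} {p : ℕ} (h1 : ω ^ p = 1) {c d : ℕ}
    (h : c ≡ d [MOD p]) : ω ^ c = ω ^ d := by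
  have key : ∀ e : ℕ, ω ^ e = ω ^ (e % p) := by
    intro e
    conv_lhs => rw [← Nat.div_add_mod e p]
    rw [pow_add, pow_mul, h1, one_pow, one_mul]
  rw [key c, key d, h]

open Finset in
lemma shift_term_zero {K : Type*} [Field K] (p q : ℕ) (hp : p.Prime) (hq : q.Prime)
    (hpq : p ≠ q) [Fact q.Prime] [Fact p.Prime] [CharP K q]
    (hr : orderOf (q : ZMod p) = p - 1) (ω : K) (hω : IsPrimitiveRoot ω p)
    (k : ℕ) (b : Fin k → ℕ) (s : MvPolynomial (Fin k) ℤ)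
    (hD : MvPolynomial.eval₂ (Int.castRingHom K) (fun j => ω ^ b j) s = 0)
    (t : ℕ) (ht0 : 0 < t) (ht : t < p) :
    MvPolynomial.eval₂ (Int.castRingHom K) (fun j => ω ^ (t * b j)) s = 0 := by
  classical
  have hco : Nat.Coprime q p := (Nat.coprime_primes hq hp).mpr (Ne.symm hpq)
  set u : (ZMod p)ˣ := ZMod.unitOfCoprime q hco with hu
  have hou : orderOf u = p - 1 := by
    rw [← orderOf_units, ZMod.coe_unitOfCoprime]; exact hr
  have htop : Subgroup.zpowers u = ⊤ := by
    apply Subgroup.eq_top_of_card_eq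
    rw [Nat.card_zpowers, hou, Nat.card_eq_fintype_card, ZMod.card_units]
  have htunit : IsUnit (t : ZMod p) := by
    rw [isUnit_iff_ne_zero, Ne, ZMod.natCast_eq_zero_iff]
    exact fun hdvd' => absurd (Nat.le_of_dvd ht0 hdvd') (not_le.mpr ht)
  obtain ⟨v, hv⟩ := htunit
  have hvmem : v ∈ Submonoid.powers u :=
    mem_powers_iff_mem_zpowers.mpr (htop ▸ Subgroup.mem_top v)
  obtain ⟨n, hn⟩ := hvmem
  have hqt : (q : ZMod p) ^ n = (t : ZMod p) := by
    have := congrArg (Units.val) hn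
    rwa [Units.val_pow_eq_pow_val, ZMod.coe_unitOfCoprime, hv] at this
  have hmod : q ^ n ≡ t [MOD p] := by
    rw [← ZMod.natCast_eq_natCast_iff, Nat.cast_pow]
    exact hqt
  have hpt : (fun j => ω ^ (t * b j)) = fun j => (ω ^ b j) ^ (q ^ n) := by
    funext j
    rw [← pow_mul]
    refine pow_congr_mod hω.pow_eq_one ?_
    calc t * b j ≡ q ^ n * b j [MOD p] := (hmod.symm).mul_right (b j)
      _ = b j * q ^ n := mul_comm _ _
  rw [hpt]
  have hfrob := MvPolynomial.eval₂_comp_left (iterateFrobenius K q n)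
    (Int.castRingHom K) (fun j => ω ^ b j) s
  rw [hD, map_zero] at hfrob
  rw [show (iterateFrobenius K q n).comp (Int.castRingHom K) = Int.castRingHom K from
    Subsingleton.elim _ _] at hfrob
  rw [show ((iterateFrobenius K q n) ∘ fun j => ω ^ b j) = fun j => (ω ^ b j) ^ q ^ n from
    funext fun j => iterateFrobenius_def q n _] at hfrob
  exact hfrob.symm

open Finset in
lemma sum_over_roots {K : Type*} [Field K] {p : ℕ} (hp : p ≠ 0) (ω : K)
    (hω : IsPrimitiveRoot ω p) (k : ℕ) (b : Fin k → ℕ) (s : MvPolynomial (Fin k) ℤ) :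
    ∑ t ∈ Finset.range p,
        MvPolynomial.eval₂ (Int.castRingHom K) (fun j => ω ^ (t * b j)) s
      = ∑ μ ∈ s.support, ((s.coeff μ : ℤ) : K) *
          (if p ∣ (∑ j, μ j * b j) then (p : K) else 0) := by
  classical
  have key : ∀ t, MvPolynomial.eval₂ (Int.castRingHom K) (fun j => ω ^ (t * b j)) s
      = ∑ μ ∈ s.support, ((s.coeff μ : ℤ) : K) * (ω ^ (∑ j, μ j * b j)) ^ t := by
    intro t
    rw [MvPolynomial.eval₂_eq']
    refine Finset.sum_congr rfl fun μ _ => ?_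
    have hprod : ∏ j, (ω ^ (t * b j)) ^ μ j = (ω ^ (∑ j, μ j * b j)) ^ t := calc
      ∏ j, (ω ^ (t * b j)) ^ μ j
        = ∏ j, ω ^ (μ j * b j * t) := by
          refine Finset.prod_congr rfl fun j _ => ?_
          rw [← pow_mul]; ring_nf
      _ = ω ^ (∑ j, μ j * b j * t) := by rw [Finset.prod_pow_eq_pow_sum]
      _ = (ω ^ (∑ j, μ j * b j)) ^ t := by rw [← pow_mul, Finset.sum_mul]
    rw [hprod]; rfl
  rw [Finset.sum_congr rfl fun t _ => key t, Finset.sum_comm]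
  refine Finset.sum_congr rfl fun μ _ => ?_
  rw [← Finset.mul_sum]
  congr 1
  by_cases h : p ∣ (∑ j, μ j * b j)
  · rw [if_pos h, (hω.pow_eq_one_iff_dvd _).mpr h]
    simp
  · rw [if_neg h]
    have hζ1 : ω ^ (∑ j, μ j * b j) ≠ 1 := fun hc => h ((hω.pow_eq_one_iff_dvd _).mp hc)
    rw [geom_sum_eq hζ1]
    rw [← pow_mul, mul_comm, pow_mul, hω.pow_eq_one, one_pow, sub_self, zero_div]

open Finset in
lemma eval₂_const_one {K : Type*} [CommRing K] {k : ℕ} (s : MvPolynomial (Fin k) ℤ) :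
    MvPolynomial.eval₂ (Int.castRingHom K) (fun _ : Fin k => (1:K)) s
      = ((MvPolynomial.eval (fun _ : Fin k => (1:ℤ)) s : ℤ) : K) := by
  have h := MvPolynomial.eval₂_comp_left (Int.castRingHom K) (RingHom.id ℤ)
      (fun _ : Fin k => (1:ℤ)) s
  rw [MvPolynomial.eval₂_id, RingHom.comp_id] at h
  have h2 : (⇑(Int.castRingHom K) ∘ fun _ : Fin k => (1:ℤ)) = fun _ : Fin k => (1:K) := by
    funext j; simp
  rw [h2] at h
  exact h.symm


set_option maxHeartbeats 2000000 in
/-- If `q ∤ m_{A,B}·p − ∏_{i<j}(a_j−a_i)/∏_{i<j}(j−i)` then the minor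
`det((F_p)_{A,B})` of the Fourier matrix over `𝔽_{q^{p-1}}` is nonzero. -/
theorem finite_field_minor_nonzero_of_not_dvd
    (p q : ℕ) (hp : p.Prime) (hq : q.Prime) (hpq : p ≠ q) [Fact q.Prime] [Fact p.Prime]
    (hr : orderOf (q : ZMod p) = p - 1)
    (ω : GaloisField q (p - 1)) (hω : IsPrimitiveRoot ω p)
    (k : ℕ) (a b : Fin k → ℕ)
    (ha : StrictMono a) (hb : StrictMono b)
    (hap : ∀ i, a i < p) (hbp : ∀ i, b i < p)
    (s : MvPolynomial (Fin k) ℤ)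
    (hs : Matrix.det (fun i j : Fin k => (MvPolynomial.X j : MvPolynomial (Fin k) ℤ) ^ a i)
        = (∏ w ∈ Finset.univ.filter (fun w : Fin k × Fin k => w.1 < w.2),
            (MvPolynomial.X w.2 - MvPolynomial.X w.1)) * s)
    (m : ℤ)
    (hm : m = ∑ μ ∈ s.support,
        s.coeff μ * (if (p : ℤ) ∣ (∑ j : Fin k, (μ j : ℤ) * (b j : ℤ)) then 1 else 0))
    (N : ℤ)
    (hN : N * (∏ w ∈ Finset.univ.filter (fun w : Fin k × Fin k => w.1 < w.2),
            ((w.2 : ℤ) - (w.1 : ℤ)))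
        = ∏ w ∈ Finset.univ.filter (fun w : Fin k × Fin k => w.1 < w.2),
            ((a w.2 : ℤ) - (a w.1 : ℤ)))
    (hdvd : ¬ (q : ℤ) ∣ (m * p - N)) :
    Matrix.det (fun i j : Fin k => ω ^ (a i * b j)) ≠ 0 := by
  classical
  set ψ : MvPolynomial (Fin k) ℤ →+* GaloisField q (p - 1) :=
    MvPolynomial.eval₂Hom (Int.castRingHom (GaloisField q (p - 1))) (fun j => ω ^ b j) with hψ
  have hA := congrArg ψ hs
  rw [RingHom.map_det ψ (fun i j : Fin k => (MvPolynomial.X j : MvPolynomial (Fin k) ℤ) ^ a i), RingHom.mapMatrix_apply ψ (fun i j : Fin k => (MvPolynomial.X j : MvPolynomial (Fin k) ℤ) ^ a i), map_mul, map_prod] at hA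
  have hmap : Matrix.map (fun i j : Fin k => (MvPolynomial.X j : MvPolynomial (Fin k) ℤ) ^ a i) ψ
      = fun i j : Fin k => ω ^ (a i * b j) := by
    funext i j
    show ψ (MvPolynomial.X j ^ a i) = ω ^ (a i * b j)
    simp [ψ, ← pow_mul, mul_comm]
  rw [hmap] at hA
  rw [hA]
  apply mul_ne_zero
  · -- Vandermonde factor nonzero
    rw [Finset.prod_ne_zero_iff]
    intro w hw
    have hlt : w.1 < w.2 := (Finset.mem_filter.mp hw).2
    have : ψ (MvPolynomial.X w.2 - MvPolynomial.X w.1) = ω ^ b w.2 - ω ^ b w.1 := by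
      simp [ψ]
    rw [this]
    refine sub_ne_zero_of_ne fun hc => ?_
    have := hω.pow_inj (hbp w.2) (hbp w.1) hc
    exact absurd (hb.injective this).symm (ne_of_lt hlt)
  · -- s(ω^b) ≠ 0
    intro hD
    have hD' : MvPolynomial.eval₂ (Int.castRingHom (GaloisField q (p - 1)))
        (fun j => ω ^ b j) s = 0 := hD
    -- N = s(1,...,1)
    have hQ : (∏ w ∈ Finset.univ.filter (fun w : Fin k × Fin k => w.1 < w.2),
        ((w.2 : ℤ) - (w.1 : ℤ))) ≠ 0 := by
      rw [Finset.prod_ne_zero_iff]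
      intro w hw
      have hlt : w.1 < w.2 := (Finset.mem_filter.mp hw).2
      have : ((w.1 : ℕ) : ℤ) < ((w.2 : ℕ) : ℤ) := by exact_mod_cast hlt
      omega
    have hNs : N = MvPolynomial.eval (fun _ => (1:ℤ)) s := by
      have h1 := eval_one_s a ha s hs
      apply mul_right_cancel₀ hQ
      rw [hN, h1]; ring
    -- the sum over roots
    have hp0 : p ≠ 0 := hp.pos.ne'
    have hS := sum_over_roots hp0 ω hω k b s
    -- RHS equals ((m * p : ℤ) : K)
    have hS1 : (∑ μ ∈ s.support, ((s.coeff μ : ℤ) : GaloisField q (p - 1)) *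
          (if p ∣ (∑ j, μ j * b j) then ((p : ℕ) : GaloisField q (p - 1)) else 0))
        = ((m * (p : ℤ) : ℤ) : GaloisField q (p - 1)) := by
      rw [hm]
      push_cast
      rw [Finset.sum_mul]
      refine Finset.sum_congr rfl fun μ _ => ?_
      have hcond : ((p : ℤ) ∣ (∑ j : Fin k, (μ j : ℤ) * (b j : ℤ))) ↔ p ∣ (∑ j, μ j * b j) := by
        rw [show (∑ j : Fin k, (μ j : ℤ) * (b j : ℤ)) = ((∑ j, μ j * b j : ℕ) : ℤ) by
          push_cast; ring]
        exact Int.natCast_dvd_natCast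
      by_cases h : p ∣ (∑ j, μ j * b j)
      · rw [if_pos h, if_pos (hcond.mpr h)]; push_cast; ring
      · rw [if_neg h, if_neg (fun hc => h (hcond.mp hc))]; push_cast; ring
    -- LHS equals ((N : ℤ) : K)
    have hS2 : (∑ t ∈ Finset.range p,
        MvPolynomial.eval₂ (Int.castRingHom (GaloisField q (p - 1)))
          (fun j => ω ^ (t * b j)) s) = ((N : ℤ) : GaloisField q (p - 1)) := by
      rw [Finset.range_eq_Ico, Finset.sum_eq_sum_Ico_succ_bot hp.pos]
      have hzero : ∀ t ∈ Finset.Ico 1 p,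
          MvPolynomial.eval₂ (Int.castRingHom (GaloisField q (p - 1)))
            (fun j => ω ^ (t * b j)) s = 0 := by
        intro t hti
        obtain ⟨ht1, ht2⟩ := Finset.mem_Ico.mp hti
        exact shift_term_zero p q hp hq hpq hr ω hω k b s hD' t ht1 ht2
      rw [Finset.sum_congr rfl hzero, Finset.sum_const, smul_zero, add_zero]
      have h0 : (fun j => ω ^ (0 * b j)) = fun _ : Fin k => (1 : GaloisField q (p - 1)) := by
        funext j; rw [zero_mul, pow_zero]
      rw [h0, hNs]
      exact eval₂_const_one s
    rw [hS2, hS1] at hS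
    have hcast : ((N - m * (p : ℤ) : ℤ) : GaloisField q (p - 1)) = 0 := by
      rw [Int.cast_sub, hS, sub_self]
    have hqd : (q : ℤ) ∣ (N - m * (p : ℤ)) := (CharP.intCast_eq_zero_iff _ q _).mp hcast
    exact hdvd (dvd_sub_comm.mp hqd)
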